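/- Let 0 < p_m ≤ p_c and let p_b° = sqrt( p_c·Σ_{i∈I} k1^i / Σ_{i∈I}(q·F^i·η^i + 1/b1^i) ). Then the unique maximizer p_b^⋄ of the anticipated profit L̃ over the interval [p_m, p_c] is given by the clamped value: p_b^⋄ = p_c if p_b° ≥ p_c, p_b^⋄ = p_m if p_b° ≤ p_m, and p_b^⋄ = p_b° if p_m < p_b° < p_c. -/
import Mathlib


open Real Set

/-- The APG's anticipated profit under CCHP best responses. -/
noncomputable def apgProfit {ι : Type*} (I : Finset ι) (q : ℝ) (F η k1 b1 : ι → ℝ)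
    (p_s p_c R : ℝ) (p : ℝ) : ℝ :=
  (p_c - p) * ∑ i ∈ I, (q * F i * η i - (k1 i / p - 1 / b1 i)) + (p_s - p_c) * R

/-- The unconstrained optimizer `p_b°`. -/
noncomputable def pbOpt {ι : Type*} (I : Finset ι) (q : ℝ) (F η k1 b1 : ι → ℝ)
    (p_c : ℝ) : ℝ :=
  Real.sqrt (p_c * (∑ i ∈ I, k1 i) / ∑ i ∈ I, (q * F i * η i + 1 / b1 i))

/-- The clamped bid `p_b^⋄`. -/
noncomputable def pbClamp {ι : Type*} (I : Finset ι) (q : ℝ) (F η k1 b1 : ι → ℝ)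
    (p_m p_c : ℝ) : ℝ :=
  if p_c ≤ pbOpt I q F η k1 b1 p_c then p_c
  else if pbOpt I q F η k1 b1 p_c ≤ p_m then p_m
  else pbOpt I q F η k1 b1 p_c

lemma quad_aux (A K pc p c : ℝ) (hA : 0 < A) (hK : 0 < K) (hp : 0 < p) (hc : 0 < c)
    (hcase : (c ≤ p ∧ pc * K ≤ A * c ^ 2) ∨ (p ≤ c ∧ A * c ^ 2 ≤ pc * K) ∨
      A * c ^ 2 = pc * K) :
    0 ≤ (p - c) * (A * p * c - pc * K) ∧
      ((p - c) * (A * p * c - pc * K) = 0 → p = c) := by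
  rcases hcase with ⟨h, h'⟩ | ⟨h, h'⟩ | h
  · have hkey : 0 ≤ A * c * (p - c) := mul_nonneg (mul_pos hA hc).le (sub_nonneg.2 h)
    have h2 : 0 ≤ A * p * c - pc * K := by nlinarith
    refine ⟨mul_nonneg (sub_nonneg.2 h) h2, ?_⟩
    intro h0
    by_contra hne
    have hlt : c < p := lt_of_le_of_ne h (fun e => hne e.symm)
    have hkey' : 0 < A * c * (p - c) := mul_pos (mul_pos hA hc) (sub_pos.2 hlt)
    have h2' : 0 < A * p * c - pc * K := by nlinarith
    nlinarith [mul_pos (sub_pos.2 hlt) h2']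
  · have hkey : 0 ≤ A * c * (c - p) := mul_nonneg (mul_pos hA hc).le (sub_nonneg.2 h)
    have h2 : A * p * c - pc * K ≤ 0 := by nlinarith
    refine ⟨?_, ?_⟩
    · nlinarith [mul_nonneg (sub_nonneg.2 h) (by linarith : 0 ≤ pc * K - A * p * c)]
    · intro h0
      by_contra hne
      have hlt : p < c := lt_of_le_of_ne h hne
      have hkey' : 0 < A * c * (c - p) := mul_pos (mul_pos hA hc) (sub_pos.2 hlt)
      have h2' : 0 < pc * K - A * p * c := by nlinarith
      nlinarith [mul_pos (sub_pos.2 hlt) h2']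
  · have hexp : (p - c) * (A * p * c - pc * K) = A * c * (p - c) ^ 2 := by
      rw [← h]; ring
    refine ⟨by rw [hexp]; positivity, ?_⟩
    intro h0
    rw [hexp] at h0
    rcases mul_eq_zero.mp h0 with h1 | h1
    · exact absurd h1 (mul_pos hA hc).ne'
    · have := pow_eq_zero_iff (n := 2) (by norm_num) |>.mp h1
      linarith [this]

/-- For `0 < p_m ≤ p_c`, the clamped value `p_b^⋄` (equal to `p_c` if `p_b° ≥ p_c`,
to `p_m` if `p_b° ≤ p_m`, and to `p_b°` otherwise) is the unique maximizer of the
anticipated profit `L̃` over `[p_m, p_c]`. -/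
theorem stmt_8 {ι : Type*} (I : Finset ι) (hI : I.Nonempty)
    (q : ℝ) (hq : 0 < q) (F η k1 b1 : ι → ℝ)
    (hF : ∀ i ∈ I, 0 < F i) (hη : ∀ i ∈ I, 0 < η i)
    (hk1 : ∀ i ∈ I, 0 < k1 i) (hb1 : ∀ i ∈ I, 0 < b1 i)
    (p_m p_c : ℝ) (hpm : 0 < p_m) (hmc : p_m ≤ p_c) (p_s R : ℝ) :
    pbClamp I q F η k1 b1 p_m p_c ∈ Icc p_m p_c ∧
    ∀ p ∈ Icc p_m p_c,
      apgProfit I q F η k1 b1 p_s p_c R p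
        ≤ apgProfit I q F η k1 b1 p_s p_c R (pbClamp I q F η k1 b1 p_m p_c) ∧
      (apgProfit I q F η k1 b1 p_s p_c R p
        = apgProfit I q F η k1 b1 p_s p_c R (pbClamp I q F η k1 b1 p_m p_c) →
        p = pbClamp I q F η k1 b1 p_m p_c) := by
  have hpc : 0 < p_c := lt_of_lt_of_le hpm hmc
  set A := ∑ i ∈ I, (q * F i * η i + 1 / b1 i) with hAdef
  set K := ∑ i ∈ I, k1 i with hKdef
  have hA : 0 < A := Finset.sum_pos (fun i hi => by
    have h1 := hF i hi; have h2 := hη i hi; have h3 := hb1 i hi; positivity) hI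
  have hK : 0 < K := Finset.sum_pos (fun i hi => hk1 i hi) hI
  have hsum : ∀ r : ℝ, ∑ i ∈ I, (q * F i * η i - (k1 i / r - 1 / b1 i)) = A - K / r := by
    intro r
    rw [hAdef, hKdef, Finset.sum_div, ← Finset.sum_sub_distrib]
    exact Finset.sum_congr rfl (fun i _ => by ring)
  have hprofit : ∀ r : ℝ, apgProfit I q F η k1 b1 p_s p_c R r
      = (p_c - r) * (A - K / r) + (p_s - p_c) * R := by
    intro r
    rw [apgProfit, hsum r]
  have hs0 : (0:ℝ) ≤ pbOpt I q F η k1 b1 p_c := Real.sqrt_nonneg _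
  have hs2 : pbOpt I q F η k1 b1 p_c ^ 2 = p_c * K / A := by
    rw [pbOpt, ← hKdef, ← hAdef, Real.sq_sqrt (by positivity)]
  have hmain : ∃ c, pbClamp I q F η k1 b1 p_m p_c = c ∧ p_m ≤ c ∧ c ≤ p_c ∧
      ((c = p_m ∧ p_c * K ≤ A * c ^ 2) ∨ (c = p_c ∧ A * c ^ 2 ≤ p_c * K) ∨
        A * c ^ 2 = p_c * K) := by
    rw [pbClamp]
    split_ifs with h1 h2
    · refine ⟨p_c, rfl, hmc, le_rfl, Or.inr (Or.inl ⟨rfl, ?_⟩)⟩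
      have h2' : p_c ^ 2 ≤ pbOpt I q F η k1 b1 p_c ^ 2 := by nlinarith
      rw [hs2] at h2'
      rw [le_div_iff₀ hA] at h2'
      nlinarith
    · refine ⟨p_m, rfl, le_rfl, hmc, Or.inl ⟨rfl, ?_⟩⟩
      have h2' : pbOpt I q F η k1 b1 p_c ^ 2 ≤ p_m ^ 2 := by nlinarith
      rw [hs2, div_le_iff₀ hA] at h2'
      nlinarith
    · refine ⟨_, rfl, le_of_not_ge h2, le_of_not_ge h1, Or.inr (Or.inr ?_)⟩
      rw [hs2]
      field_simp
  obtain ⟨c, hceq, hcm, hcc, hcase⟩ := hmain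
  rw [hceq]
  have hc0 : 0 < c := lt_of_lt_of_le hpm hcm
  refine ⟨⟨hcm, hcc⟩, ?_⟩
  rintro p ⟨hp1, hp2⟩
  have hp0 : 0 < p := lt_of_lt_of_le hpm hp1
  have hcase' : (c ≤ p ∧ p_c * K ≤ A * c ^ 2) ∨ (p ≤ c ∧ A * c ^ 2 ≤ p_c * K) ∨
      A * c ^ 2 = p_c * K := by
    rcases hcase with ⟨h, h'⟩ | ⟨h, h'⟩ | h
    · exact Or.inl ⟨h ▸ hp1, h'⟩
    · exact Or.inr (Or.inl ⟨h ▸ hp2, h'⟩)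
    · exact Or.inr (Or.inr h)
  obtain ⟨hge, heq⟩ := quad_aux A K p_c p c hA hK hp0 hc0 hcase'
  have hdiff : apgProfit I q F η k1 b1 p_s p_c R c - apgProfit I q F η k1 b1 p_s p_c R p
      = (p - c) * (A * p * c - p_c * K) / (p * c) := by
    rw [hprofit c, hprofit p]
    field_simp
    ring
  constructor
  · have hd := div_nonneg hge (mul_pos hp0 hc0).le
    linarith
  · intro heqp
    apply heq
    have h0 : (p - c) * (A * p * c - p_c * K) / (p * c) = 0 := by
      rw [← hdiff]; linarith
    have hne : p * c ≠ 0 := (mul_pos hp0 hc0).ne'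
    exact (div_eq_zero_iff.mp h0).resolve_right hne
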